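/- Every partition λ of n that is orthogonal (every even part has even multiplicity) or symplectic (every odd part has even multiplicity) is uniquely determined by the set PL(λ) = {μ ≤ λ : |OM(μ)| ≤ 1, μ of the same type}. Equivalently: if λ, λ' are two such partitions of n of the same type with PL(λ) = PL(λ'), then λ = λ'. -/

import Mathlib

/-- `l` represents a partition of `n`: weakly decreasing, supported on indices `< n`,
with parts summing to `n`. -/
def IsPartition (n : ℕ) (l : ℕ → ℕ) : Prop :=
  (∀ i j, i ≤ j → l j ≤ l i) ∧ (∀ i, n ≤ i → l i = 0) ∧ ∑ i ∈ Finset.range n, l i = n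

/-- Dominance order: every partial sum of `a` is at most the corresponding one of `b`. -/
def Dom (a b : ℕ → ℕ) : Prop :=
  ∀ k, ∑ i ∈ Finset.range k, a i ≤ ∑ i ∈ Finset.range k, b i

/-- Multiplicity of the part `p` among the first `N` parts. -/
def mult (N : ℕ) (l : ℕ → ℕ) (p : ℕ) : ℕ :=
  ((Finset.range N).filter fun i => l i = p).card

/-- Orthogonal partition: every (nonzero) even part occurs with even multiplicity. -/
def Orth (N : ℕ) (l : ℕ → ℕ) : Prop := ∀ p, 0 < p → Even p → Even (mult N l p)

/-- Symplectic partition: every odd part occurs with even multiplicity. -/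
def Symp (N : ℕ) (l : ℕ → ℕ) : Prop := ∀ p, Odd p → Even (mult N l p)

/-- `|OM(l)| ≤ 1`: at most one part greater than `1` occurs with odd multiplicity. -/
def OMone (N : ℕ) (l : ℕ → ℕ) : Prop :=
  ∀ p q, 1 < p → 1 < q → Odd (mult N l p) → Odd (mult N l q) → p = q

namespace PLdev

/-- sorted-descending list of a multiset -/
def sortedDesc (M : Multiset ℕ) : List ℕ := (M.sort (· ≤ ·)).reverse

lemma sortedDesc_sorted (M : Multiset ℕ) : (sortedDesc M).Pairwise (· ≥ ·) := by
  rw [sortedDesc, List.pairwise_reverse]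
  exact M.pairwise_sort (· ≤ ·)

lemma sortedDesc_coe (M : Multiset ℕ) : (↑(sortedDesc M) : Multiset ℕ) = M := by
  rw [sortedDesc, ← Multiset.coe_reverse, List.reverse_reverse]
  exact M.sort_eq (· ≤ ·)

/-- maximum sum of at most `j` parts -/
def maxsum (j : ℕ) (M : Multiset ℕ) : ℕ := ((sortedDesc M).take j).sum

lemma take_sum_succ (L : List ℕ) (j : ℕ) :
    (L.take (j+1)).sum = (L.take j).sum + L.getD j 0 := by
  rw [List.take_succ, List.sum_append]
  congr 1
  rcases lt_or_ge j L.length with h | h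
  · rw [List.getD_eq_getElem _ _ h, List.getElem?_eq_getElem h]; simp
  · rw [List.getD_eq_default _ _ h, List.getElem?_eq_none h]; simp

lemma getD_mem_or_zero (L : List ℕ) (j : ℕ) : L.getD j 0 ∈ L ∨ L.getD j 0 = 0 := by
  rcases lt_or_ge j L.length with h | h
  · left; rw [List.getD_eq_getElem _ _ h]; exact List.getElem_mem h
  · right; exact List.getD_eq_default _ _ h

/-- K0 : any submultiset of a sorted list with at most j elements has sum at most
the sum of the first j entries. -/
lemma sum_le_take (L : List ℕ) (hL : L.Pairwise (· ≥ ·)) (A : Multiset ℕ)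
    (hA : A ≤ ↑L) (j : ℕ) (hj : Multiset.card A ≤ j) : A.sum ≤ (L.take j).sum := by
  induction L generalizing A j with
  | nil =>
    have : A = 0 := le_antisymm (by simpa using hA) (Multiset.zero_le _)
    simp [this]
  | cons x L ih =>
    by_cases hx : x ∈ A
    · have hA' : A.erase x ≤ ↑L := by
        have := Multiset.erase_le_erase (s := A) (t := ↑(x :: L)) x hA
        rwa [← Multiset.cons_coe, Multiset.erase_cons_head] at this
      have hApos : 1 ≤ Multiset.card A := by
        rw [Nat.one_le_iff_ne_zero, Ne, Multiset.card_eq_zero]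
        rintro rfl; simp at hx
      have hcard : Multiset.card A = Multiset.card (A.erase x) + 1 := by
        rw [Multiset.card_erase_of_mem hx]
        exact (Nat.succ_pred_eq_of_pos hApos).symm
      obtain ⟨j', rfl⟩ : ∃ j', j = j' + 1 := ⟨j - 1, by omega⟩
      have h1 : (A.erase x).sum ≤ (L.take j').sum := ih hL.of_cons (A.erase x) hA' j' (by omega)
      have h2 : A.sum = x + (A.erase x).sum := by
        conv_lhs => rw [← Multiset.cons_erase hx]
        simp
      simp only [List.take_succ_cons, List.sum_cons]
      omega
    · have hA' : A ≤ ↑L := by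
        rw [Multiset.le_iff_count] at hA ⊢
        intro a
        rcases eq_or_ne a x with rfl | hne
        · simp [Multiset.count_eq_zero_of_notMem hx]
        · have := hA a
          rwa [← Multiset.cons_coe, Multiset.count_cons_of_ne hne] at this
      have h1 : A.sum ≤ (L.take j).sum := ih hL.of_cons A hA' j hj
      have h2 : (L.take j).sum ≤ ((x :: L).take j).sum := by
        cases j with
        | zero => simp
        | succ j' =>
          simp only [List.take_succ_cons, List.sum_cons]
          rw [take_sum_succ]
          have : L.getD j' 0 ≤ x := by
            rcases getD_mem_or_zero L j' with h | h
            · exact List.rel_of_pairwise_cons hL h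
            · omega
          omega
      omega

/-- K1: lower bound for maxsum by any submultiset -/
lemma le_maxsum_of_le (M A : Multiset ℕ) (j : ℕ) (hA : A ≤ M)
    (hj : Multiset.card A ≤ j) : A.sum ≤ maxsum j M :=
  sum_le_take (sortedDesc M) (sortedDesc_sorted M) A (by rw [sortedDesc_coe]; exact hA) j hj

/-- K2: maxsum is attained -/
lemma exists_maxsum_witness (M : Multiset ℕ) (j : ℕ) :
    ∃ A : Multiset ℕ, A ≤ M ∧ Multiset.card A ≤ j ∧ A.sum = maxsum j M := by
  refine ⟨↑((sortedDesc M).take j), ?_, ?_, ?_⟩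
  · conv_rhs => rw [← sortedDesc_coe M]
    exact Multiset.coe_le.mpr (List.take_sublist j _).subperm
  · simpa using (List.length_take_le j (sortedDesc M))
  · simp [maxsum]

/-- K3 : for a sorted-descending list, maxsum is the sum of the first j entries. -/
lemma maxsum_coe_sorted (L : List ℕ) (hL : L.Pairwise (· ≥ ·)) (j : ℕ) :
    maxsum j ↑L = (L.take j).sum := by
  refine le_antisymm ?_ ?_
  · obtain ⟨A, hA, hc, hs⟩ := exists_maxsum_witness (↑L) j
    rw [← hs]
    exact sum_le_take L hL A hA j hc
  · exact le_maxsum_of_le _ _ _ (Multiset.coe_le.mpr (List.take_sublist j _).subperm)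
      (by simpa using List.length_take_le j L)

lemma msum_le_msum (A M : Multiset ℕ) (h : A ≤ M) : A.sum ≤ M.sum := by
  have := tsub_add_cancel_of_le h
  calc A.sum ≤ A.sum + (M - A).sum := Nat.le_add_right _ _
  _ = M.sum := by rw [← Multiset.sum_add, add_comm, tsub_add_cancel_of_le h]

lemma maxsum_le_sum (M : Multiset ℕ) (j : ℕ) : maxsum j M ≤ M.sum := by
  obtain ⟨A, hA, _, hs⟩ := exists_maxsum_witness M j
  rw [← hs]
  exact msum_le_msum A M hA

lemma maxsum_eq_sum (M : Multiset ℕ) (j : ℕ) (h : Multiset.card M ≤ j) : maxsum j M = M.sum := by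
  refine le_antisymm (maxsum_le_sum M j) ?_
  exact le_maxsum_of_le M M j le_rfl h

/-- Lemma D: replacing a submultiset R by K (same sum, K "flatter" than R)
only decreases every maxsum. -/
lemma maxsum_replace_le (M R K : Multiset ℕ) (hR : R ≤ M)
    (hK : ∀ A₁ : Multiset ℕ, A₁ ≤ K → A₁.sum ≤ maxsum (Multiset.card A₁) R) :
    ∀ j, maxsum j (M - R + K) ≤ maxsum j M := by
  intro j
  obtain ⟨A, hA, hc, hs⟩ := exists_maxsum_witness (M - R + K) j
  rw [← hs]
  have hA2 : A ∩ (M - R) ≤ M - R := Multiset.inter_le_right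
  have hA1 : A - (M - R) ≤ K := Multiset.sub_le_iff_le_add.mpr (by rw [add_comm]; exact hA)
  have hsplit : A ∩ (M - R) + (A - (M - R)) = A := by
    rw [add_comm]; exact Multiset.sub_add_inter A (M - R)
  obtain ⟨W, hW, hWc, hWs⟩ := exists_maxsum_witness R (Multiset.card (A - (M - R)))
  have hBle : A ∩ (M - R) + W ≤ M := by
    calc A ∩ (M - R) + W ≤ (M - R) + R := add_le_add hA2 hW
    _ = M := tsub_add_cancel_of_le hR
  have hBcard : Multiset.card (A ∩ (M - R) + W) ≤ j := by
    rw [Multiset.card_add]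
    have h1 : Multiset.card (A ∩ (M - R)) + Multiset.card (A - (M - R)) = Multiset.card A := by
      rw [← Multiset.card_add, hsplit]
    omega
  have h2 : (A - (M - R)).sum ≤ W.sum := by
    rw [hWs]; exact hK _ hA1
  calc A.sum = (A ∩ (M - R)).sum + (A - (M - R)).sum := by rw [← Multiset.sum_add, hsplit]
  _ ≤ (A ∩ (M - R)).sum + W.sum := by omega
  _ = (A ∩ (M - R) + W).sum := (Multiset.sum_add _ _).symm
  _ ≤ maxsum j M := le_maxsum_of_le M _ j hBle hBcard

def OrthM (M : Multiset ℕ) : Prop := ∀ p, 0 < p → Even p → Even (M.count p)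
def SympM (M : Multiset ℕ) : Prop := ∀ p, Odd p → Even (M.count p)
def OMoneM (M : Multiset ℕ) : Prop :=
  ∀ p q, 1 < p → 1 < q → Odd (M.count p) → Odd (M.count q) → p = q

def msq (M : Multiset ℕ) : ℕ := (M.map (fun x => x * x)).sum

lemma msq_add (M K : Multiset ℕ) : msq (M + K) = msq M + msq K := by
  simp [msq, Multiset.map_add, Multiset.sum_add]

lemma msq_split (M R : Multiset ℕ) (h : R ≤ M) : msq M = msq (M - R) + msq R := by
  conv_lhs => rw [← tsub_add_cancel_of_le h]
  exact msq_add _ _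

lemma sum_split (M R : Multiset ℕ) (h : R ≤ M) : M.sum = (M - R).sum + R.sum := by
  conv_lhs => rw [← tsub_add_cancel_of_le h]
  exact Multiset.sum_add _ _

lemma core (TT : Multiset ℕ → Prop) (hTT : TT = OrthM ∨ TT = SympM) (N : ℕ) :
    ∀ M : Multiset ℕ, msq M ≤ N → TT M → ∀ k : ℕ,
    ∃ M' : Multiset ℕ, TT M' ∧ OMoneM M' ∧ M'.sum = M.sum ∧
      (∀ j, maxsum j M' ≤ maxsum j M) ∧ maxsum k M ≤ maxsum k M' := by
  induction N using Nat.strong_induction_on with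
  | _ N ihN =>
  intro M hmsq hTTM k
  by_cases hOM : OMoneM M
  · exact ⟨M, hTTM, hOM, rfl, fun _ => le_rfl, le_rfl⟩
  -- extract two distinct values > 1 with odd multiplicity
  have hex : ∃ a b : ℕ, 1 < a ∧ 1 < b ∧ b < a ∧ Odd (M.count a) ∧ Odd (M.count b) := by
    rw [OMoneM] at hOM
    push_neg at hOM
    obtain ⟨p, q, hp, hq, hop, hoq, hne⟩ := hOM
    rcases lt_or_gt_of_ne hne with h | h
    · exact ⟨q, p, hq, hp, h, hoq, hop⟩
    · exact ⟨p, q, hp, hq, h, hop, hoq⟩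
  obtain ⟨a, b, ha1, hb1, hba, hoa, hob⟩ := hex
  have hane : a ≠ b := by omega
  -- a and b have the same parity
  have hpar : a % 2 = b % 2 := by
    rcases hTT with rfl | rfl
    · -- orthogonal: both odd
      have h1 : ¬ Even a := fun h => (Nat.not_odd_iff_even.mpr (hTTM a (by omega) h)) hoa
      have h2 : ¬ Even b := fun h => (Nat.not_odd_iff_even.mpr (hTTM b (by omega) h)) hob
      rw [Nat.even_iff] at h1 h2; omega
    · -- symplectic: both even
      have h1 : ¬ Odd a := fun h => (Nat.not_odd_iff_even.mpr (hTTM a h)) hoa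
      have h2 : ¬ Odd b := fun h => (Nat.not_odd_iff_even.mpr (hTTM b h)) hob
      rw [Nat.odd_iff] at h1 h2; omega
  obtain ⟨d, hd1, hd2⟩ : ∃ d, a = b + 2 * d ∧ 1 ≤ d := ⟨(a - b) / 2, by omega⟩
  set c : ℕ := b + d with hc
  have hcapos : 0 < M.count a := by rcases hoa with ⟨t, ht⟩; omega
  have hcbpos : 0 < M.count b := by rcases hob with ⟨t, ht⟩; omega
  obtain ⟨A, hAM, hAk, hAs⟩ := exists_maxsum_witness M k
  by_cases hbA : b ∈ A
  · -- averaging move: both a and b are in the witness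
    have haA : a ∈ A := by
      by_contra haA
      have hA' : (a ::ₘ A.erase b) ≤ M := by
        rw [Multiset.le_iff_count]
        intro v
        rcases eq_or_ne v a with rfl | hva
        · rw [Multiset.count_cons_self,
            Multiset.count_eq_zero_of_notMem (fun h => haA (Multiset.mem_of_mem_erase h))]
          omega
        · rw [Multiset.count_cons_of_ne hva]
          calc (A.erase b).count v ≤ A.count v := Multiset.count_le_of_le v (Multiset.erase_le b A)
          _ ≤ M.count v := Multiset.count_le_of_le v hAM
      have hApos : 1 ≤ Multiset.card A := by
        rw [Nat.one_le_iff_ne_zero, Ne, Multiset.card_eq_zero]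
        rintro rfl; simp at hbA
      have hcard' : Multiset.card (a ::ₘ A.erase b) ≤ k := by
        rw [Multiset.card_cons, Multiset.card_erase_of_mem hbA]
        have h5 : (Multiset.card A).pred + 1 = Multiset.card A := Nat.succ_pred_eq_of_pos hApos
        omega
      have hsum' : (a ::ₘ A.erase b).sum = A.sum + a - b := by
        rw [Multiset.sum_cons]
        have : A.sum = b + (A.erase b).sum := by
          conv_lhs => rw [← Multiset.cons_erase hbA]; rw [Multiset.sum_cons]
        omega
      have := le_maxsum_of_le M _ k hA' hcard'
      rw [← hAs] at this
      omega
    -- R = {a, b}, K = {c, c}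
    set R : Multiset ℕ := a ::ₘ {b} with hR
    set K : Multiset ℕ := Multiset.replicate 2 c with hK
    have hcountR : ∀ v, R.count v = (if v = a then 1 else 0) + (if v = b then 1 else 0) := by
      intro v
      rw [hR, Multiset.count_cons, Multiset.count_singleton]
      split <;> split <;> omega
    have hRA : R ≤ A := by
      rw [Multiset.le_iff_count]
      intro v
      rw [hcountR]
      rcases eq_or_ne v a with rfl | hva
      · have := Multiset.one_le_count_iff_mem.mpr haA
        simp [hane]; omega
      · rcases eq_or_ne v b with rfl | hvb
        · have := Multiset.one_le_count_iff_mem.mpr hbA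
          simp [hva]; omega
        · simp [hva, hvb]
      done
    have hRM : R ≤ M := le_trans hRA hAM
    have hKsum : K.sum = R.sum := by
      rw [hK, hR, Multiset.sum_replicate]
      simp [hc]
      omega
    have hKcard : ∀ A₁ : Multiset ℕ, A₁ ≤ K → A₁.sum ≤ maxsum (Multiset.card A₁) R := by
      intro A₁ hA₁
      have hall : ∀ x ∈ A₁, x = c := fun x hx =>
        Multiset.eq_of_mem_replicate (Multiset.mem_of_le hA₁ hx)
      have hA1sum : A₁.sum = Multiset.card A₁ * c := by
        conv_lhs => rw [Multiset.eq_replicate_card.mpr hall]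
        rw [Multiset.sum_replicate, smul_eq_mul]
      have hA1card : Multiset.card A₁ ≤ 2 := by
        have := Multiset.card_le_card hA₁
        simpa [hK] using this
      interval_cases h : Multiset.card A₁
      · simp [hA1sum]
      · rw [hA1sum]
        have : ({a} : Multiset ℕ) ≤ R := by
          rw [hR, Multiset.singleton_le]; exact Multiset.mem_cons_self a _
        have h2 := le_maxsum_of_le R {a} 1 this (by simp)
        simp at h2
        omega
      · rw [hA1sum]
        have h2 := le_maxsum_of_le R R 2 le_rfl (by simp [hR])
        have : R.sum = a + b := by simp [hR]
        omega
    set M' : Multiset ℕ := M - R + K with hM'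
    have hdom : ∀ j, maxsum j M' ≤ maxsum j M := maxsum_replace_le M R K hRM hKcard
    have hsumM' : M'.sum = M.sum := by
      rw [hM', Multiset.sum_add, sum_split M R hRM, hKsum]
    have hcountM' : ∀ v, M'.count v =
        M.count v - ((if v = a then 1 else 0) + (if v = b then 1 else 0))
          + (if v = c then 2 else 0) := by
      intro v
      rw [hM', Multiset.count_add, Multiset.count_sub, hcountR, hK, Multiset.count_replicate]
      congr 1
      rcases eq_or_ne v c with rfl | h
      · rfl
      · rw [if_neg (fun hh => h hh.symm), if_neg h]
    have hTTM' : TT M' := by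
      rcases hTT with rfl | rfl
      · have haodd : a % 2 = 1 := by
          have h2 : ¬ Even a := fun h => (Nat.not_odd_iff_even.mpr (hTTM a (by omega) h)) hoa
          rw [Nat.even_iff] at h2; omega
        intro v hv hev
        have hva : v ≠ a := by rintro rfl; rw [Nat.even_iff] at hev; omega
        have hvb : v ≠ b := by rintro rfl; rw [Nat.even_iff] at hev; omega
        have := hTTM v hv hev
        rw [Nat.even_iff] at this ⊢
        rw [hcountM', if_neg hva, if_neg hvb]
        split <;> omega
      · have haev : a % 2 = 0 := by
          have h2 : ¬ Odd a := fun h => (Nat.not_odd_iff_even.mpr (hTTM a h)) hoa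
          rw [Nat.odd_iff] at h2; omega
        intro v hodd
        have hva : v ≠ a := by rintro rfl; rw [Nat.odd_iff] at hodd; omega
        have hvb : v ≠ b := by rintro rfl; rw [Nat.odd_iff] at hodd; omega
        have := hTTM v hodd
        rw [Nat.even_iff] at this ⊢
        rw [hcountM', if_neg hva, if_neg hvb]
        split <;> omega
    have hmsq' : msq M' < msq M := by
      rw [hM', msq_add, msq_split M R hRM]
      have h1 : msq K = 2 * (c * c) := by
        rw [hK, msq, Multiset.map_replicate, Multiset.sum_replicate, smul_eq_mul]
      have h2 : msq R = a * a + b * b := by simp [hR, msq]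
      rw [h1, h2]
      have hdd : 1 ≤ d * d := by
        have := Nat.mul_le_mul hd2 hd2; simpa using this
      have : 2 * (c * c) + 2 * (d * d) = a * a + b * b := by
        rw [hc, hd1]; ring
      omega
    have hup : maxsum k M ≤ maxsum k M' := by
      have hA'le : A - R + K ≤ M' := by
        rw [hM']
        exact add_le_add (tsub_le_tsub_right hAM R) le_rfl
      have hA'card : Multiset.card (A - R + K) ≤ k := by
        rw [Multiset.card_add, Multiset.card_sub hRA]
        have h1 : Multiset.card R ≤ Multiset.card A := Multiset.card_le_card hRA
        have h2 : Multiset.card R = 2 := by simp [hR]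
        have h3 : Multiset.card K = 2 := by simp [hK]
        omega
      have hA'sum : (A - R + K).sum = A.sum := by
        rw [Multiset.sum_add, hKsum]
        have := sum_split A R hRA
        omega
      have := le_maxsum_of_le M' _ k hA'le hA'card
      rw [hA'sum, hAs] at this
      exact this
    obtain ⟨M'', hTT'', hOM'', hsum'', hdom'', hup''⟩ :=
      ihN (msq M') (by omega) M' le_rfl hTTM' k
    exact ⟨M'', hTT'', hOM'', by rw [hsum'', hsumM'],
      fun j => le_trans (hdom'' j) (hdom j), le_trans hup hup''⟩
  · -- splitting move: b is entirely outside the witness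
    set R : Multiset ℕ := ({b} : Multiset ℕ) with hR
    set K : Multiset ℕ := Multiset.replicate b 1 with hK
    have hRM : R ≤ M := by rw [hR, Multiset.singleton_le]; exact Multiset.count_pos.mp hcbpos
    have hKcard : ∀ A₁ : Multiset ℕ, A₁ ≤ K → A₁.sum ≤ maxsum (Multiset.card A₁) R := by
      intro A₁ hA₁
      have hall : ∀ x ∈ A₁, x = 1 := fun x hx =>
        Multiset.eq_of_mem_replicate (Multiset.mem_of_le hA₁ hx)
      have hA1sum : A₁.sum = Multiset.card A₁ := by
        conv_lhs => rw [Multiset.eq_replicate_card.mpr hall]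
        rw [Multiset.sum_replicate, smul_eq_mul, mul_one]
      have hA1card : Multiset.card A₁ ≤ b := by
        have := Multiset.card_le_card hA₁
        simpa [hK] using this
      rcases Nat.eq_zero_or_pos (Multiset.card A₁) with h0 | h0
      · simp [hA1sum, h0]
      · have h2 := le_maxsum_of_le R R (Multiset.card A₁) le_rfl
          (by rw [hR, Multiset.card_singleton]; omega)
        have : R.sum = b := by simp [hR]
        omega
    set M' : Multiset ℕ := M - R + K with hM'
    have hdom : ∀ j, maxsum j M' ≤ maxsum j M := maxsum_replace_le M R K hRM hKcard
    have hKsum : K.sum = R.sum := by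
      rw [hK, hR, Multiset.sum_replicate, Multiset.sum_singleton, smul_eq_mul, mul_one]
    have hsumM' : M'.sum = M.sum := by
      rw [hM', Multiset.sum_add, sum_split M R hRM, hKsum]
    have hcountM' : ∀ v, M'.count v =
        M.count v - (if v = b then 1 else 0) + (if v = 1 then b else 0) := by
      intro v
      rw [hM', Multiset.count_add, Multiset.count_sub, hR, hK,
        Multiset.count_singleton, Multiset.count_replicate]
      congr 1
      rcases eq_or_ne v 1 with rfl | h
      · rfl
      · rw [if_neg (fun hh => h hh.symm), if_neg h]
    have hTTM' : TT M' := by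
      rcases hTT with rfl | rfl
      · -- orth: b is odd here
        have hbodd : b % 2 = 1 := by
          have h2 : ¬ Even b := fun h => (Nat.not_odd_iff_even.mpr (hTTM b (by omega) h)) hob
          rw [Nat.even_iff] at h2; omega
        intro v hv hev
        have hvb : v ≠ b := by rintro rfl; rw [Nat.even_iff] at hev; omega
        have hv1 : v ≠ 1 := by rintro rfl; rw [Nat.even_iff] at hev; omega
        have := hTTM v hv hev
        rw [Nat.even_iff] at this ⊢
        rw [hcountM', if_neg hvb, if_neg hv1]
        omega
      · -- symp: b is even here
        have hbev : b % 2 = 0 := by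
          have h2 : ¬ Odd b := fun h => (Nat.not_odd_iff_even.mpr (hTTM b h)) hob
          rw [Nat.odd_iff] at h2; omega
        intro v hodd
        have hvb : v ≠ b := by rintro rfl; rw [Nat.odd_iff] at hodd; omega
        have := hTTM v hodd
        rw [Nat.even_iff] at this ⊢
        rw [hcountM', if_neg hvb]
        split <;> omega
    have hmsq' : msq M' < msq M := by
      rw [hM', msq_add, msq_split M R hRM]
      have h1 : msq K = b := by
        rw [hK, msq, Multiset.map_replicate, Multiset.sum_replicate]
        simp
      have h2 : msq R = b * b := by simp [hR, msq]
      have : b < b * b := by nlinarith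
      omega
    have hup : maxsum k M ≤ maxsum k M' := by
      have hAle : A ≤ M' := by
        rw [hM']
        refine le_trans ?_ (Multiset.le_add_right _ _)
        rw [Multiset.le_iff_count]
        intro v
        rw [Multiset.count_sub, hR, Multiset.count_singleton]
        rcases eq_or_ne v b with rfl | hvb
        · rw [Multiset.count_eq_zero_of_notMem hbA]; omega
        · rw [if_neg hvb]
          have := Multiset.count_le_of_le v hAM
          omega
      have := le_maxsum_of_le M' A k hAle hAk
      rw [hAs] at this
      exact this
    obtain ⟨M'', hTT'', hOM'', hsum'', hdom'', hup''⟩ :=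
      ihN (msq M') (by omega) M' le_rfl hTTM' k
    exact ⟨M'', hTT'', hOM'', by rw [hsum'', hsumM'],
      fun j => le_trans (hdom'' j) (hdom j), le_trans hup hup''⟩

/-! ### Bridges between functions and multisets -/

def Mf (n : ℕ) (f : ℕ → ℕ) : Multiset ℕ := (Finset.range n).val.map f

lemma Mf_coe (n : ℕ) (f : ℕ → ℕ) : Mf n f = ↑((List.range n).map f) := by
  rw [Mf, Finset.range_val, ← Multiset.coe_range, ← Multiset.map_coe]

lemma mult_eq_count (n : ℕ) (f : ℕ → ℕ) (p : ℕ) : mult n f p = (Mf n f).count p := by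
  rw [mult, Mf, Multiset.count_map, Finset.card_def, Finset.filter_val]
  congr 1
  exact Multiset.filter_congr (fun x _ => eq_comm)

lemma Mf_sum (n : ℕ) (f : ℕ → ℕ) : (Mf n f).sum = ∑ i ∈ Finset.range n, f i :=
  (Finset.sum_eq_multiset_sum _ f).symm

lemma sum_range_getD (L : List ℕ) (j : ℕ) :
    ∑ i ∈ Finset.range j, L.getD i 0 = (L.take j).sum := by
  induction j with
  | zero => simp
  | succ j ih => rw [Finset.sum_range_succ, ih, take_sum_succ]

lemma length_le_sum (L : List ℕ) (h : ∀ x ∈ L, 1 ≤ x) : L.length ≤ L.sum := by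
  induction L with
  | nil => simp
  | cons x L ih =>
    have h1 := h x (List.mem_cons_self)
    have h2 := ih (fun y hy => h y (List.mem_cons_of_mem x hy))
    simp only [List.length_cons, List.sum_cons]
    omega

/-- partial sums of a partition are the maxsums of its multiset -/
lemma psums_eq_maxsum (n : ℕ) (f : ℕ → ℕ) (hf : IsPartition n f) (j : ℕ) :
    ∑ i ∈ Finset.range j, f i = maxsum j (Mf n f) := by
  set L : List ℕ := (List.range n).map f with hL
  have hcoe : Mf n f = ↑L := Mf_coe n f
  have hsorted : L.Pairwise (· ≥ ·) := by
    rw [hL, List.pairwise_map]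
    exact List.Pairwise.imp (fun hab => hf.1 _ _ (le_of_lt hab)) (List.pairwise_lt_range (n := n))
  rw [hcoe, maxsum_coe_sorted L hsorted, hL, ← List.map_take, List.take_range]
  have hmap : ∀ m : ℕ, (((List.range m).map f)).sum = ∑ i ∈ Finset.range m, f i := by
    intro m
    rw [← Multiset.sum_coe, ← Mf_coe, Mf_sum]
  rw [hmap]
  rcases le_or_gt j n with h | h
  · rw [min_eq_left h]
  · rw [min_eq_right (le_of_lt h)]
    refine (Finset.sum_subset (Finset.range_subset_range.mpr (le_of_lt h)) ?_).symm
    intro x _ hx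
    exact hf.2.1 x (by simpa using hx)

/-- reconstruction of a partition function from a multiset -/
lemma reconstruct (n : ℕ) (M' : Multiset ℕ) (hsum : M'.sum = n) :
    ∃ μ : ℕ → ℕ, IsPartition n μ ∧ (∀ p, 1 ≤ p → (Mf n μ).count p = M'.count p) ∧
      (∀ j, ∑ i ∈ Finset.range j, μ i = maxsum j M') := by
  set L' : List ℕ := sortedDesc M' with hL'
  have hsorted : L'.Pairwise (· ≥ ·) := sortedDesc_sorted M'
  have hLsum : L'.sum = n := by
    rw [← Multiset.sum_coe, hL', sortedDesc_coe, hsum]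
  have hdropzero : ∀ x ∈ L'.drop n, x = 0 := by
    intro x hx
    by_contra hx0
    have hx1 : 1 ≤ x := by omega
    have hlen : n < L'.length := by
      by_contra hc
      rw [List.drop_eq_nil_of_le (by omega)] at hx
      simp at hx
    have hsplit := List.take_append_drop n L'
    have hpw : ∀ a ∈ L'.take n, ∀ b ∈ L'.drop n, a ≥ b := by
      have := hsorted
      rw [← hsplit, List.pairwise_append] at this
      exact this.2.2
    have htake1 : ∀ a ∈ L'.take n, 1 ≤ a := fun a ha => le_trans hx1 (hpw a ha x hx)
    have htlen : (L'.take n).length = n := by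
      rw [List.length_take]; omega
    have h1 : n ≤ (L'.take n).sum := by
      have := length_le_sum (L'.take n) htake1
      omega
    have h2 : x ≤ (L'.drop n).sum := List.single_le_sum (fun y _ => Nat.zero_le y) x hx
    have h3 : (L'.take n).sum + (L'.drop n).sum = L'.sum := by
      rw [← List.sum_append, hsplit]
    omega
  refine ⟨fun i => L'.getD i 0, ⟨?_, ?_, ?_⟩, ?_, ?_⟩
  · -- antitone
    intro i j hij
    show L'.getD j 0 ≤ L'.getD i 0
    rcases eq_or_lt_of_le hij with rfl | hlt
    · exact le_rfl
    rcases lt_or_ge j L'.length with hj | hj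
    · have hi : i < L'.length := lt_trans hlt hj
      rw [List.getD_eq_getElem _ _ hj, List.getD_eq_getElem _ _ hi]
      exact hsorted.rel_get_of_lt (a := ⟨i, hi⟩) (b := ⟨j, hj⟩) hlt
    · rw [List.getD_eq_default _ _ hj]
      exact Nat.zero_le _
  · -- support
    intro i hi
    show L'.getD i 0 = 0
    rcases lt_or_ge i L'.length with h | h
    · rw [List.getD_eq_getElem _ _ h]
      have hd : i - n < (L'.drop n).length := by rw [List.length_drop]; omega
      have : (L'.drop n)[i - n] = L'[i] := by
        rw [List.getElem_drop]
        congr 1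
        omega
      rw [← this]
      exact hdropzero _ (List.getElem_mem hd)
    · exact List.getD_eq_default _ _ h
  · -- total sum
    show ∑ i ∈ Finset.range n, L'.getD i 0 = n
    rw [sum_range_getD]
    have h3 : (L'.take n).sum + (L'.drop n).sum = L'.sum := by
      rw [← List.sum_append, List.take_append_drop]
    have h4 : (L'.drop n).sum = 0 := List.sum_eq_zero hdropzero
    omega
  · -- counts
    intro p hp
    have hW : (List.range n).map (fun i => L'.getD i 0)
        = L'.take n ++ List.replicate (n - L'.length) 0 := by
      apply List.ext_getElem
      · simp only [List.length_map, List.length_range, List.length_append,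
          List.length_take, List.length_replicate]
        omega
      · intro i h1 h2
        simp only [List.getElem_map, List.getElem_range]
        rcases lt_or_ge i L'.length with h | h
        · have hi' : i < (L'.take n).length := by
            rw [List.length_take]
            simp only [List.length_map, List.length_range] at h1
            omega
          rw [List.getElem_append_left hi', List.getElem_take, List.getD_eq_getElem _ _ h]
        · have hi' : (L'.take n).length ≤ i := by
            rw [List.length_take]; omega
          rw [List.getElem_append_right hi', List.getElem_replicate,
            List.getD_eq_default _ _ h]
    have hL : (Mf n fun i => L'.getD i 0).count p
        = ((List.range n).map (fun i => L'.getD i 0)).count p := by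
      rw [Mf_coe, Multiset.coe_count]
    rw [hL, hW, List.count_append]
    have hc2 : (List.replicate (n - L'.length) 0).count p = 0 := by
      rw [List.count_eq_zero]
      intro hmem
      have := List.eq_of_mem_replicate hmem
      omega
    have hc3 : (L'.drop n).count p = 0 := by
      rw [List.count_eq_zero]
      intro hmem
      have := hdropzero p hmem
      omega
    have hc4 : (L'.take n).count p + (L'.drop n).count p = L'.count p := by
      rw [← List.count_append, List.take_append_drop]
    have hc5 : M'.count p = L'.count p := by
      rw [← sortedDesc_coe M', Multiset.coe_count]
    omega
  · -- partial sums
    intro j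
    show ∑ i ∈ Finset.range j, L'.getD i 0 = maxsum j M'
    rw [sum_range_getD]
    rfl

lemma half (n : ℕ) (TT : Multiset ℕ → Prop) (hTT : TT = OrthM ∨ TT = SympM)
    (T : (ℕ → ℕ) → Prop) (hbridge : ∀ h : ℕ → ℕ, T h ↔ TT (Mf n h))
    (f g : ℕ → ℕ) (hf : IsPartition n f) (hTf : T f)
    (hPL : ∀ m, IsPartition n m → T m → OMone n m → (Dom m f → Dom m g)) (k : ℕ) :
    ∑ i ∈ Finset.range k, f i ≤ ∑ i ∈ Finset.range k, g i := by
  set M := Mf n f with hM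
  have hTTM : TT M := (hbridge f).mp hTf
  obtain ⟨M', hTT', hOM', hsum', hdom', hup'⟩ := core TT hTT (msq M) M le_rfl hTTM k
  have hMsum : M.sum = n := by rw [hM, Mf_sum]; exact hf.2.2
  obtain ⟨μ, hμpart, hμcount, hμsums⟩ := reconstruct n M' (by rw [hsum', hMsum])
  have hTμ : T μ := by
    rw [hbridge]
    rcases hTT with rfl | rfl
    · intro p hp hev
      rw [hμcount p (by omega)]
      exact hTT' p hp hev
    · intro p hodd
      have hp1 : 1 ≤ p := by rcases hodd with ⟨t, ht⟩; omega
      rw [hμcount p hp1]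
      exact hTT' p hodd
  have hOMμ : OMone n μ := by
    intro p q hp hq hop hoq
    rw [mult_eq_count, hμcount p (by omega)] at hop
    rw [mult_eq_count, hμcount q (by omega)] at hoq
    exact hOM' p q hp hq hop hoq
  have hDomf : Dom μ f := by
    intro j
    rw [hμsums j, psums_eq_maxsum n f hf j]
    exact hdom' j
  have hDomg := hPL μ hμpart hTμ hOMμ hDomf
  have h1 := hDomg k
  rw [hμsums k] at h1
  calc ∑ i ∈ Finset.range k, f i = maxsum k M := psums_eq_maxsum n f hf k
    _ ≤ maxsum k M' := hup'
    _ ≤ ∑ i ∈ Finset.range k, g i := h1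

end PLdev

open PLdev in
/-- An orthogonal (resp. symplectic) partition of `n` is uniquely determined by the set
`PL(λ)` of partitions `μ ≤ λ` of the same type with `|OM(μ)| ≤ 1`: if two such partitions
of the same type dominate exactly the same such `μ`, they are equal. -/
theorem partition_determined_by_PL (n : ℕ) (T : (ℕ → ℕ) → Prop)
    (hT : T = Orth n ∨ T = Symp n) (l l' : ℕ → ℕ)
    (hl : IsPartition n l) (hl' : IsPartition n l') (hTl : T l) (hTl' : T l')
    (hPL : ∀ m, IsPartition n m → T m → OMone n m → (Dom m l ↔ Dom m l')) :
    ∀ i, l i = l' i := by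
  have key : ∀ k, ∑ i ∈ Finset.range k, l i = ∑ i ∈ Finset.range k, l' i := by
    intro k
    rcases hT with rfl | rfl
    · have hb : ∀ h : ℕ → ℕ, Orth n h ↔ OrthM (Mf n h) := by
        intro h
        constructor
        · intro H p hp hev; rw [← mult_eq_count]; exact H p hp hev
        · intro H p hp hev; rw [mult_eq_count]; exact H p hp hev
      exact le_antisymm
        (half n OrthM (Or.inl rfl) (Orth n) hb l l' hl hTl
          (fun m h1 h2 h3 => (hPL m h1 h2 h3).mp) k)
        (half n OrthM (Or.inl rfl) (Orth n) hb l' l hl' hTl'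
          (fun m h1 h2 h3 => (hPL m h1 h2 h3).mpr) k)
    · have hb : ∀ h : ℕ → ℕ, Symp n h ↔ SympM (Mf n h) := by
        intro h
        constructor
        · intro H p hodd; rw [← mult_eq_count]; exact H p hodd
        · intro H p hodd; rw [mult_eq_count]; exact H p hodd
      exact le_antisymm
        (half n SympM (Or.inr rfl) (Symp n) hb l l' hl hTl
          (fun m h1 h2 h3 => (hPL m h1 h2 h3).mp) k)
        (half n SympM (Or.inr rfl) (Symp n) hb l' l hl' hTl'
          (fun m h1 h2 h3 => (hPL m h1 h2 h3).mpr) k)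
  intro i
  rcases lt_or_ge i n with h | h
  · have h1 := key i
    have h2 := key (i + 1)
    rw [Finset.sum_range_succ, Finset.sum_range_succ] at h2
    omega
  · rw [hl.2.1 i h, hl'.2.1 i h]
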